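/- Let U be a universe of separations, S ⊆ U a structurally submodular separation system, and 𝒫 a set of profiles of S. Then every consistent orientation O of S that is not a member of 𝒫 includes a star σ ⊆ O that is included in no profile belonging to 𝒫. -/

import Mathlib

namespace SepDemo

/-- A universe of separations: a finite lattice with an order-reversing involution. -/
structure SepUniverse (U : Type*) [Lattice U] [Fintype U] where
  inv : U → U
  inv_inv : ∀ s, inv (inv s) = s
  le_iff : ∀ r s : U, r ≤ s ↔ inv s ≤ inv r

/-- A submodular universe: a universe with a submodular order function. -/
structure SubmodUniverse (U : Type*) [Lattice U] [Fintype U] extends SepUniverse U where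
  ord : U → ℕ
  ord_inv : ∀ s, ord (inv s) = ord s
  submod : ∀ s t : U, ord (s ⊔ t) + ord (s ⊓ t) ≤ ord s + ord t

variable {U : Type*} [Lattice U] [Fintype U]

/-- A separation system inside a universe: a subset closed under the involution. -/
def SepSystem (𝒰 : SepUniverse U) (S : Set U) : Prop :=
  ∀ s ∈ S, 𝒰.inv s ∈ S

/-- An orientation of `S`: contains, for each `s ∈ S`, exactly one of `s`, `s*`
(just `s` itself if `s` is degenerate). -/
def IsOrientation (𝒰 : SepUniverse U) (S O : Set U) : Prop :=
  O ⊆ S ∧ ∀ s ∈ S, (s ∈ O ∨ 𝒰.inv s ∈ O) ∧ (s ∈ O → 𝒰.inv s ∈ O → s = 𝒰.inv s)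

/-- Consistency: no `r, s ∈ O` with `{r,r*} ≠ {s,s*}` and `r* ≤ s`. -/
def Consistent (𝒰 : SepUniverse U) (O : Set U) : Prop :=
  ∀ r ∈ O, ∀ s ∈ O, ({r, 𝒰.inv r} : Set U) ≠ ({s, 𝒰.inv s} : Set U) → ¬ 𝒰.inv r ≤ s

/-- A profile of `S`: a consistent orientation satisfying the profile property. -/
def IsProfile (𝒰 : SepUniverse U) (S P : Set U) : Prop :=
  IsOrientation 𝒰 S P ∧ Consistent 𝒰 P ∧ ∀ r ∈ P, ∀ s ∈ P, 𝒰.inv (r ⊔ s) ∉ P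

/-- Regular: contains no cosmall separation. -/
def Regular (𝒰 : SepUniverse U) (P : Set U) : Prop :=
  ∀ s ∈ P, ¬ 𝒰.inv s ≤ s

/-- Two separations are nested. -/
def Nested (𝒰 : SepUniverse U) (r s : U) : Prop :=
  r ≤ s ∨ r ≤ 𝒰.inv s ∨ 𝒰.inv r ≤ s ∨ 𝒰.inv r ≤ 𝒰.inv s

/-- A set of separations is nested if its members are pairwise nested. -/
def NestedSet (𝒰 : SepUniverse U) (N : Set U) : Prop :=
  ∀ r ∈ N, ∀ s ∈ N, Nested 𝒰 r s

/-- `s` distinguishes the orientations `O₁` and `O₂`. -/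
def Distinguishes (𝒰 : SepUniverse U) (s : U) (O₁ O₂ : Set U) : Prop :=
  (s ∈ O₁ ∧ 𝒰.inv s ∈ O₂) ∨ (𝒰.inv s ∈ O₁ ∧ s ∈ O₂)

/-- Two orientations are distinguishable. -/
def Distinguishable (𝒰 : SepUniverse U) (P Q : Set U) : Prop :=
  ∃ s : U, Distinguishes 𝒰 s P Q

/-- Structural submodularity of a separation system. -/
def StructSubmodular (S : Set U) : Prop :=
  ∀ s ∈ S, ∀ t ∈ S, s ⊔ t ∈ S ∨ s ⊓ t ∈ S

/-- `s` is trivial in `S`. -/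
def IsTrivialIn (𝒰 : SepUniverse U) (S : Set U) (s : U) : Prop :=
  ∃ r ∈ S, ({r, 𝒰.inv r} : Set U) ≠ ({s, 𝒰.inv s} : Set U) ∧ s ≤ r ∧ s ≤ 𝒰.inv r

/-- A star of separations. -/
def IsStar (𝒰 : SepUniverse U) (σ : Set U) : Prop :=
  ∀ r ∈ σ, ∀ s ∈ σ, r ≠ s → r ≤ 𝒰.inv s

/-- The shift `σ_x^{s₀}` of a star `σ` at `x ∈ σ` to `s₀`. -/
def shiftStar (𝒰 : SepUniverse U) (σ : Set U) (x s₀ : U) : Set U :=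
  insert (x ⊔ s₀) ((fun y => y ⊓ 𝒰.inv s₀) '' (σ \ {x}))

/-- `s₀` emulates `r` in `S`. -/
def Emulates (𝒰 : SepUniverse U) (S : Set U) (s₀ r : U) : Prop :=
  r ≤ s₀ ∧ ∀ t ∈ S, t ≠ 𝒰.inv r → r ≤ t → t ⊔ s₀ ∈ S

/-- `s₀` emulates `r` in `S` for a set `F` of stars. -/
def EmulatesFor (𝒰 : SepUniverse U) (S : Set U) (F : Set (Set U)) (s₀ r : U) : Prop :=
  Emulates 𝒰 S s₀ r ∧
    ∀ σ ∈ F, 𝒰.inv r ∉ σ → ∀ x ∈ σ, r ≤ x → shiftStar 𝒰 σ x s₀ ∈ F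

/-- `F` forces `s`. -/
def Forces (𝒰 : SepUniverse U) (F : Set (Set U)) (s : U) : Prop :=
  ({𝒰.inv s} : Set U) ∈ F

/-- `S` is `F`-separable. -/
def FSeparable (𝒰 : SepUniverse U) (S : Set U) (F : Set (Set U)) : Prop :=
  ∀ r₁ ∈ S, ∀ r₂ ∈ S,
    ¬ IsTrivialIn 𝒰 S r₁ → ¬ IsTrivialIn 𝒰 S r₂ →
    r₁ ≠ 𝒰.inv r₁ → r₂ ≠ 𝒰.inv r₂ →
    ¬ Forces 𝒰 F r₁ → ¬ Forces 𝒰 F r₂ →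
    r₁ ≤ 𝒰.inv r₂ →
    ∃ s₀ ∈ S, r₁ ≤ s₀ ∧ s₀ ≤ 𝒰.inv r₂ ∧
      EmulatesFor 𝒰 S F s₀ r₁ ∧ EmulatesFor 𝒰 S F (𝒰.inv s₀) r₂

/-- `r` is `F`-critical. -/
def FCritical (𝒰 : SepUniverse U) (F : Set (Set U)) (r : U) : Prop :=
  (∃ σ ∈ F, r ∈ σ) ∧
    ¬ ∃ σ' ∈ F, σ' ∩ ({r, 𝒰.inv r} : Set U) = ({𝒰.inv r} : Set U)

/-- `S` is critically `F`-separable. -/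
def CritFSeparable (𝒰 : SepUniverse U) (S : Set U) (F : Set (Set U)) : Prop :=
  ∀ r₁ ∈ S, ∀ r₂ ∈ S, FCritical 𝒰 F r₁ → FCritical 𝒰 F r₂ → r₁ ≤ 𝒰.inv r₂ →
    ∃ s₀ ∈ S, EmulatesFor 𝒰 S F s₀ r₁ ∧ EmulatesFor 𝒰 S F (𝒰.inv s₀) r₂

/-- An `F`-tangle of `S`: a consistent orientation including no member of `F`. -/
def FTangle (𝒰 : SepUniverse U) (S : Set U) (F : Set (Set U)) (O : Set U) : Prop :=
  IsOrientation 𝒰 S O ∧ Consistent 𝒰 O ∧ ∀ σ ∈ F, ¬ σ ⊆ O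

/-- `F` is standard for `S`: it forces all trivial separations of `S`. -/
def StandardFor (𝒰 : SepUniverse U) (S : Set U) (F : Set (Set U)) : Prop :=
  ∀ r ∈ S, IsTrivialIn 𝒰 S r → ({𝒰.inv r} : Set U) ∈ F

/-- An `S`-tree: a finite tree together with edge labels in `S` commuting with
the involution. -/
structure STree (𝒰 : SepUniverse U) (S : Set U) where
  V : Type
  fintypeV : Fintype V
  G : SimpleGraph V
  isTree : G.IsTree
  label : V → V → U
  label_mem : ∀ x y, G.Adj x y → label x y ∈ S
  label_inv : ∀ x y, G.Adj x y → label y x = 𝒰.inv (label x y)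

namespace STree

variable {𝒰 : SepUniverse U} {S : Set U}

/-- The star `α(t)` associated with a node `t`. -/
def nodeStar (T : STree 𝒰 S) (t : T.V) : Set U :=
  {u | ∃ s, T.G.Adj s t ∧ T.label s t = u}

/-- The `S`-tree is over `F`. -/
def Over (T : STree 𝒰 S) (F : Set (Set U)) : Prop :=
  ∀ t : T.V, T.nodeStar t ∈ F

/-- Irredundance of an `S`-tree. -/
def Irredundant (T : STree 𝒰 S) : Prop :=
  ∀ t t' t'' : T.V, T.G.Adj t' t → T.G.Adj t'' t → t' ≠ t'' →
    T.label t' t ≠ T.label t'' t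

/-- The set of edge labels of the tree. -/
def labels (T : STree 𝒰 S) : Set U :=
  {u | ∃ x y, T.G.Adj x y ∧ T.label x y = u}

/-- `t` is a sink of the orientation of the tree induced by `P`. -/
def IsSinkOf (T : STree 𝒰 S) (P : Set U) (t : T.V) : Prop :=
  ∀ s, T.G.Adj s t → T.label s t ∈ P

/-- The degree of a node. -/
noncomputable def deg (T : STree 𝒰 S) (t : T.V) : ℕ :=
  (T.G.neighborSet t).ncard

/-- The maximum degree of the tree. -/
noncomputable def maxDeg (T : STree 𝒰 S) : ℕ :=
  sSup {n | ∃ t : T.V, T.deg t = n}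

end STree

/-- A tree of tangles for `S`: an irredundant `S`-tree whose edge labels
distinguish every two distinct regular profiles of `S`. -/
def TreeOfTangles (𝒰 : SepUniverse U) (S : Set U) (T : STree 𝒰 S) : Prop :=
  T.Irredundant ∧
    ∀ P Q : Set U, IsProfile 𝒰 S P → Regular 𝒰 P → IsProfile 𝒰 S Q → Regular 𝒰 Q →
      P ≠ Q → ∃ s ∈ T.labels, Distinguishes 𝒰 s P Q

/-- `δ(P)`: the minimum size of a subset of `P` distinguishing `P` from every
other regular profile of `S`. -/
noncomputable def deltaP (𝒰 : SepUniverse U) (S P : Set U) : ℕ :=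
  sInf {n | ∃ D : Set U, D ⊆ P ∧ D.ncard = n ∧
    ∀ Q : Set U, IsProfile 𝒰 S Q → Regular 𝒰 Q → Q ≠ P →
      ∃ s ∈ D, Distinguishes 𝒰 s P Q}

/-- `S_k`: the separations of order less than `k`. -/
def Sk (𝒱 : SubmodUniverse U) (k : ℕ) : Set U := {s | 𝒱.ord s < k}

/-- `s` distinguishes `P` and `Q` efficiently. -/
def EffDistinguishes (𝒱 : SubmodUniverse U) (s : U) (P Q : Set U) : Prop :=
  Distinguishes 𝒱.toSepUniverse s P Q ∧
    ∀ t : U, Distinguishes 𝒱.toSepUniverse t P Q → 𝒱.ord s ≤ 𝒱.ord t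

/-- Property `Eff(P)` of a star `σ`. -/
def EffProp (𝒱 : SubmodUniverse U) (σ P : Set U) : Prop :=
  ¬ ∃ s ∈ σ, ∃ s' ∈ P, s ≤ s' ∧ 𝒱.ord s' < 𝒱.ord s

/-- `s` is a splice for `r`. -/
def SpliceFor (𝒱 : SubmodUniverse U) (s r : U) : Prop :=
  r ≤ s ∧ ¬ ∃ t : U, r ≤ t ∧ t ≤ s ∧ 𝒱.ord t < 𝒱.ord s

/-- `s` is a splice between `r₁` and `r₂`. -/
def SpliceBetween (𝒱 : SubmodUniverse U) (s r₁ r₂ : U) : Prop :=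
  r₁ ≤ s ∧ s ≤ r₂ ∧ ∀ t : U, r₁ ≤ t → t ≤ r₂ → 𝒱.ord s ≤ 𝒱.ord t

/-- The set `F_e` of stars in `S_k` included in at most one profile of `𝔓` and
satisfying `Eff(P)` whenever included in `P ∈ 𝔓`. -/
def Fe (𝒱 : SubmodUniverse U) (k : ℕ) (𝔓 : Set (Set U)) : Set (Set U) :=
  {σ | σ ⊆ Sk 𝒱 k ∧ IsStar 𝒱.toSepUniverse σ ∧
    (∀ P ∈ 𝔓, ∀ Q ∈ 𝔓, σ ⊆ P → σ ⊆ Q → P = Q) ∧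
    (∀ P ∈ 𝔓, σ ⊆ P → EffProp 𝒱 σ P)}

/-- `δ_e(P)`: the minimum size of a star `σ ⊆ P` with `Eff(P)` such that every
other regular profile of `S_k` contains the inverse of some element of `σ`. -/
noncomputable def deltaE (𝒱 : SubmodUniverse U) (k : ℕ) (P : Set U) : ℕ :=
  sInf {n | ∃ σ : Set U, σ ⊆ P ∧ IsStar 𝒱.toSepUniverse σ ∧ EffProp 𝒱 σ P ∧
    σ.ncard = n ∧
    ∀ Q : Set U, IsProfile 𝒱.toSepUniverse (Sk 𝒱 k) Q → Regular 𝒱.toSepUniverse Q →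
      Q ≠ P → ∃ s ∈ σ, 𝒱.inv s ∈ Q}

/-- `δ_{e,max}`: maximum of `δ_e` over all regular profiles of `S_k`. -/
noncomputable def deltaEMax (𝒱 : SubmodUniverse U) (k : ℕ) : ℕ :=
  sSup {n | ∃ P : Set U, IsProfile 𝒱.toSepUniverse (Sk 𝒱 k) P ∧
    Regular 𝒱.toSepUniverse P ∧ deltaE 𝒱 k P = n}

/-- `P` is a profile in `U`: a `k`-profile for some `k`. -/
def ProfileIn (𝒱 : SubmodUniverse U) (P : Set U) : Prop :=
  ∃ k : ℕ, IsProfile 𝒱.toSepUniverse (Sk 𝒱 k) P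

/-- Strong robustness of a profile. -/
def StronglyRobust (𝒱 : SubmodUniverse U) (P : Set U) : Prop :=
  ∀ s ∈ P, ∀ r : U, 𝒱.ord (s ⊔ r) ≤ 𝒱.ord s → 𝒱.ord (s ⊔ 𝒱.inv r) ≤ 𝒱.ord s →
    (s ⊔ r ∈ P ∨ s ⊔ 𝒱.inv r ∈ P)

/-- `O` weakly orients a separation as `s'` if `s' ≤ r` for some `r ∈ O`. -/
def WeaklyOrientsAs (O : Set U) (s' : U) : Prop :=
  ∃ r ∈ O, s' ≤ r

/-- `O` weakly orients `s` (as `s` or as `s*`). -/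
def WeaklyOrients (𝒰 : SepUniverse U) (O : Set U) (s : U) : Prop :=
  WeaklyOrientsAs O s ∨ WeaklyOrientsAs O (𝒰.inv s)

/-- The set `F_d` of stars, relative to the set of profiles `𝔓`. -/
def Fd (𝒱 : SubmodUniverse U) (𝔓 : Set (Set U)) : Set (Set U) :=
  {σ | IsStar 𝒱.toSepUniverse σ ∧
    (∀ P ∈ 𝔓, ∀ Q ∈ 𝔓, σ ⊆ P → σ ⊆ Q → P = Q) ∧
    (∀ P ∈ 𝔓, ¬ σ ⊆ P → ∃ s ∈ σ, WeaklyOrientsAs P (𝒱.inv s)) ∧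
    (∀ P ∈ 𝔓, σ ⊆ P → EffProp 𝒱 σ P)}
section AuxNPS

variable {𝒰 : SepUniverse U}

lemma aux_inv_le {r s : U} (h : r ≤ s) : 𝒰.inv s ≤ 𝒰.inv r := (𝒰.le_iff r s).mp h

lemma aux_le_inv {a b : U} (h : b ≤ 𝒰.inv a) : a ≤ 𝒰.inv b := by
  have := aux_inv_le (𝒰 := 𝒰) h
  rwa [𝒰.inv_inv] at this

lemma aux_inv_injective : Function.Injective 𝒰.inv := by
  intro a b h
  have := congrArg 𝒰.inv h
  rwa [𝒰.inv_inv, 𝒰.inv_inv] at this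

lemma aux_inv_sup (r s : U) : 𝒰.inv (r ⊔ s) = 𝒰.inv r ⊓ 𝒰.inv s := by
  apply le_antisymm
  · exact le_inf (aux_inv_le le_sup_left) (aux_inv_le le_sup_right)
  · have h1 : r ≤ 𝒰.inv (𝒰.inv r ⊓ 𝒰.inv s) := aux_le_inv inf_le_left
    have h2 : s ≤ 𝒰.inv (𝒰.inv r ⊓ 𝒰.inv s) := aux_le_inv inf_le_right
    have h3 : r ⊔ s ≤ 𝒰.inv (𝒰.inv r ⊓ 𝒰.inv s) := sup_le h1 h2
    have := aux_inv_le (𝒰 := 𝒰) h3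
    rwa [𝒰.inv_inv] at this

lemma aux_pair {r s : U} (h : ({r, 𝒰.inv r} : Set U) = ({s, 𝒰.inv s} : Set U)) :
    r = s ∨ r = 𝒰.inv s := by
  have : r ∈ ({s, 𝒰.inv s} : Set U) := by rw [← h]; exact Set.mem_insert _ _
  simpa using this

/-- Handy form of consistency. -/
lemma aux_cons {O : Set U} (hc : Consistent 𝒰 O) {r s : U} (hr : r ∈ O) (hs : s ∈ O)
    (h1 : r ≠ s) (h2 : r ≠ 𝒰.inv s) (hle : 𝒰.inv r ≤ s) : False :=
  hc r hr s hs (fun he => (aux_pair he).elim h1 h2) hle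

/-- An orientation of `S` that includes another orientation equals it. -/
lemma aux_orient_subset_eq {S O P : Set U} (hO : IsOrientation 𝒰 S O)
    (hP : IsOrientation 𝒰 S P) (hOP : O ⊆ P) : O = P := by
  apply Set.Subset.antisymm hOP
  intro p hp
  have hpS : p ∈ S := hP.1 hp
  rcases (hO.2 p hpS).1 with h | h
  · exact h
  · have : p = 𝒰.inv p := (hP.2 p hpS).2 hp (hOP h)
    rwa [this]

/-- Key lemma: shrink a star `σ ⊆ O ∩ P` to escape the profile `P` while every
profile containing the new star still contains `σ`. -/
lemma aux_shrink (𝒰 : SepUniverse U) (S : Set U) (hS : SepSystem 𝒰 S)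
    (hsub : StructSubmodular S)
    (O : Set U) (hO : IsOrientation 𝒰 S O) (hc : Consistent 𝒰 O)
    (P : Set U) (hP : IsProfile 𝒰 S P)
    (t : U) (htO : t ∈ O) (htP : t ∉ P) (htmin : ∀ u ∈ O, u ∉ P → u ≤ t → u = t)
    (σ : Set U) (hσO : σ ⊆ O) (hσP : σ ⊆ P) (hstar : IsStar 𝒰 σ) :
    ∃ σ' : Set U, σ' ⊆ O ∧ IsStar 𝒰 σ' ∧ ¬ σ' ⊆ P ∧
      ∀ Q : Set U, IsProfile 𝒰 S Q → σ' ⊆ Q → σ ⊆ Q := by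
  classical
  have hcP : Consistent 𝒰 P := hP.2.1
  have htS : t ∈ S := hO.1 htO
  have hitS : 𝒰.inv t ∈ S := hS t htS
  have hitP : 𝒰.inv t ∈ P := by
    rcases (hP.1.2 t htS).1 with h | h
    · exact absurd h htP
    · exact h
  have htit : t ≠ 𝒰.inv t := by
    intro h; exact htP (h ▸ hitP)
  -- the key pointwise fact
  have key : ∀ x ∈ σ, ¬ x ≤ 𝒰.inv t → x ⊓ 𝒰.inv t ∈ O ∧ x ⊓ 𝒰.inv t ∈ P := by
    intro x hxσ hx
    have hxO : x ∈ O := hσO hxσ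
    have hxP : x ∈ P := hσP hxσ
    have hxS : x ∈ S := hO.1 hxO
    have hxt : x ≠ t := fun h => htP (h ▸ hxP)
    have hxit : x ≠ 𝒰.inv t := by
      intro h
      have h1 : 𝒰.inv x ∈ O := by rw [h, 𝒰.inv_inv]; exact htO
      have h2 : x = 𝒰.inv x := (hO.2 x hxS).2 hxO h1
      rw [h] at h2
      exact htit (aux_inv_injective (𝒰 := 𝒰) (by rw [← h2]))
    have hntx : ¬ t ≤ x := by
      intro hle
      refine aux_cons hcP hitP hxP ?_ ?_ (by rwa [𝒰.inv_inv])
      · exact fun h => hxit h.symm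
      · exact fun h => hxt (aux_inv_injective (𝒰 := 𝒰) h).symm
    have hnxit : ¬ 𝒰.inv x ≤ t := fun hle => aux_cons hc hxO htO hxt hxit hle
    have hnitx : ¬ 𝒰.inv t ≤ x := by
      refine fun hle => aux_cons hc htO hxO (fun h => hxt h.symm) ?_ hle
      intro h
      exact hxit (aux_inv_injective (𝒰 := 𝒰) (by rw [← h, 𝒰.inv_inv])).symm
    -- Case J is impossible by minimality of t
    have hJ : x ⊔ 𝒰.inv t ∉ S := by
      intro hjS
      set j := x ⊔ 𝒰.inv t with hj
      have hinvj : 𝒰.inv j = 𝒰.inv x ⊓ t := by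
        rw [hj, aux_inv_sup, 𝒰.inv_inv]
      have hjP : j ∈ P := by
        rcases (hP.1.2 j hjS).1 with h | h
        · exact h
        · exact absurd h (hP.2.2 x hxP (𝒰.inv t) hitP)
      have htj : t ≠ j := fun h => htP (h ▸ hjP)
      have htinvj : t ≠ 𝒰.inv j := by
        intro h
        have : 𝒰.inv t = j := by rw [h, 𝒰.inv_inv]
        exact hx (this ▸ le_sup_left)
      have hjO : j ∉ O := by
        intro hjO
        exact aux_cons hc htO hjO htj htinvj le_sup_right
      have hjiO : 𝒰.inv j ∈ O := by
        rcases (hO.2 j hjS).1 with h | h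
        · exact absurd h hjO
        · exact h
      have hjiP : 𝒰.inv j ∉ P := by
        intro h
        have : j = 𝒰.inv j := (hP.1.2 j hjS).2 hjP h
        exact hjO (this ▸ hjiO)
      have hjle : 𝒰.inv j ≤ t := by rw [hinvj]; exact inf_le_right
      have := htmin (𝒰.inv j) hjiO hjiP hjle
      rw [hinvj] at this
      have h1 : t ≤ 𝒰.inv x := by
        conv_lhs => rw [← this]
        exact inf_le_left
      exact hx (aux_le_inv (𝒰 := 𝒰) h1)
    have hmS : x ⊓ 𝒰.inv t ∈ S := (hsub x hxS (𝒰.inv t) hitS).resolve_left hJ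
    set m := x ⊓ 𝒰.inv t with hm
    have hxm : x ≠ m := fun h => hx (h ▸ inf_le_right)
    have hxim : x ≠ 𝒰.inv m := by
      intro h
      have h1 : 𝒰.inv x = m := by rw [h, 𝒰.inv_inv]
      have h2 : 𝒰.inv x ≤ 𝒰.inv t := h1 ▸ inf_le_right
      have := aux_inv_le (𝒰 := 𝒰) h2
      rw [𝒰.inv_inv, 𝒰.inv_inv] at this
      exact hntx this
    have hxlm : 𝒰.inv x ≤ 𝒰.inv m := aux_inv_le inf_le_left
    constructor
    · rcases (hO.2 m hmS).1 with h | h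
      · exact h
      · exact absurd (aux_cons hc hxO h hxim (by rwa [𝒰.inv_inv]) hxlm) not_false
    · rcases (hP.1.2 m hmS).1 with h | h
      · exact h
      · exact absurd (aux_cons hcP hxP h hxim (by rwa [𝒰.inv_inv]) hxlm) not_false
  -- the shrunk star
  set f : U → U := fun x => if x ≤ 𝒰.inv t then x else x ⊓ 𝒰.inv t with hf
  have hfle : ∀ x, f x ≤ 𝒰.inv t := by
    intro x
    by_cases h : x ≤ 𝒰.inv t
    · simp [hf, h]
    · simp only [hf, if_neg h]; exact inf_le_right
  have hfx : ∀ x, f x ≤ x := by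
    intro x
    by_cases h : x ≤ 𝒰.inv t
    · simp [hf, h]
    · simp only [hf, if_neg h]; exact inf_le_left
  have hfO : ∀ x ∈ σ, f x ∈ O := by
    intro x hxσ
    by_cases h : x ≤ 𝒰.inv t
    · simp only [hf, if_pos h]; exact hσO hxσ
    · simp only [hf, if_neg h]; exact (key x hxσ h).1
  refine ⟨insert t (f '' σ), ?_, ?_, ?_, ?_⟩
  · intro u hu
    rcases hu with rfl | ⟨x, hxσ, rfl⟩
    · exact htO
    · exact hfO x hxσ
  · intro r hr s hs hrs
    rcases hr with rfl | ⟨x, hxσ, rfl⟩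
    · rcases hs with rfl | ⟨y, hyσ, rfl⟩
      · exact absurd rfl hrs
      · exact aux_le_inv (𝒰 := 𝒰) (hfle y)
    · rcases hs with rfl | ⟨y, hyσ, rfl⟩
      · exact hfle x
      · have hxy : x ≠ y := fun h => hrs (h ▸ rfl)
        calc f x ≤ x := hfx x
        _ ≤ 𝒰.inv y := hstar x hxσ y hyσ hxy
        _ ≤ 𝒰.inv (f y) := aux_inv_le (hfx y)
  · exact fun h => htP (h (Set.mem_insert _ _))
  · intro Q hQ hσ'Q x hxσ
    by_cases h : x ≤ 𝒰.inv t
    · have : f x ∈ Q := hσ'Q (Set.mem_insert_of_mem _ ⟨x, hxσ, rfl⟩)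
      simpa only [hf, if_pos h] using this
    · have hmQ : x ⊓ 𝒰.inv t ∈ Q := by
        have : f x ∈ Q := hσ'Q (Set.mem_insert_of_mem _ ⟨x, hxσ, rfl⟩)
        simpa only [hf, if_neg h] using this
      have htQ : t ∈ Q := hσ'Q (Set.mem_insert _ _)
      have hxS : x ∈ S := hO.1 (hσO hxσ)
      by_contra hxQ
      have hixQ : 𝒰.inv x ∈ Q := by
        rcases (hQ.1.2 x hxS).1 with h' | h'
        · exact absurd h' hxQ
        · exact h'
      have := hQ.2.2 (𝒰.inv x) hixQ t htQ
      rw [aux_inv_sup, 𝒰.inv_inv] at this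
      exact this hmQ

end AuxNPS

/-- Every consistent orientation of a structurally submodular
separation system that is not a member of `𝔓` includes a star included in no
profile belonging to `𝔓`. -/
theorem non_profile_star (𝒰 : SepUniverse U) (S : Set U)
    (hS : SepSystem 𝒰 S) (hsub : StructSubmodular S)
    (𝔓 : Set (Set U)) (h𝔓 : ∀ P ∈ 𝔓, IsProfile 𝒰 S P)
    (O : Set U) (hO : IsOrientation 𝒰 S O) (hc : Consistent 𝒰 O)
    (hnot : O ∉ 𝔓) :
    ∃ σ : Set U, σ ⊆ O ∧ IsStar 𝒰 σ ∧ ∀ P ∈ 𝔓, ¬ σ ⊆ P := by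
  classical
  have hfin : 𝔓.Finite := Set.toFinite 𝔓
  have main : ∀ 𝔔 : Set (Set U), 𝔔.Finite →
      (∀ P ∈ 𝔔, IsProfile 𝒰 S P ∧ P ≠ O) →
      ∃ σ : Set U, σ ⊆ O ∧ IsStar 𝒰 σ ∧ ∀ P ∈ 𝔔, ¬ σ ⊆ P := by
    intro 𝔔 h𝔔fin
    refine Set.Finite.induction_on (motive := fun 𝔔 _ => (∀ P ∈ 𝔔, IsProfile 𝒰 S P ∧ P ≠ O) →
        ∃ σ : Set U, σ ⊆ O ∧ IsStar 𝒰 σ ∧ ∀ P ∈ 𝔔, ¬ σ ⊆ P) 𝔔 h𝔔fin ?_ ?_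
    · intro _
      exact ⟨∅, Set.empty_subset _, fun r hr => absurd hr (Set.notMem_empty r),
        fun P hP => absurd hP (Set.notMem_empty P)⟩
    · intro P 𝔔' hP𝔔' h𝔔'fin IH hall
      obtain ⟨σ, hσO, hσstar, hσ⟩ := IH fun Q hQ => hall Q (Set.mem_insert_of_mem _ hQ)
      obtain ⟨hPprof, hPne⟩ := hall P (Set.mem_insert _ _)
      by_cases hσP : σ ⊆ P
      · -- need to escape P
        have hOP : ¬ O ⊆ P := by
          intro h
          exact hPne (aux_orient_subset_eq hO hPprof.1 h).symm
        have hne : (O \ P).Nonempty := by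
          rcases Set.not_subset.mp hOP with ⟨t, htO, htP⟩
          exact ⟨t, htO, htP⟩
        obtain ⟨t, htOP, htmin⟩ : ∃ t ∈ O \ P, ∀ a' ∈ O \ P, id a' ≤ id t → id t = id a' := by
          obtain ⟨t, ht⟩ := Set.Finite.exists_minimal (Set.toFinite (O \ P)) hne
          exact ⟨t, ht.1, fun a' ha' hle => le_antisymm (ht.2 ha' hle) hle⟩
        obtain ⟨σ', hσ'O, hσ'star, hσ'P, hσ'pres⟩ :=
          aux_shrink 𝒰 S hS hsub O hO hc P hPprof t htOP.1 htOP.2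
            (fun u huO huP hule => (htmin u ⟨huO, huP⟩ hule).symm) σ hσO hσP hσstar
        refine ⟨σ', hσ'O, hσ'star, ?_⟩
        intro Q hQ hσ'Q
        rcases hQ with rfl | hQ
        · exact hσ'P hσ'Q
        · exact hσ Q hQ (hσ'pres Q (hall Q (Set.mem_insert_of_mem _ hQ)).1 hσ'Q)
      · refine ⟨σ, hσO, hσstar, ?_⟩
        intro Q hQ hσQ
        rcases hQ with rfl | hQ
        · exact hσP hσQ
        · exact hσ Q hQ hσQ
  obtain ⟨σ, h1, h2, h3⟩ := main 𝔓 hfin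
    (fun P hP => ⟨h𝔓 P hP, fun h => hnot (h ▸ hP)⟩)
  exact ⟨σ, h1, h2, h3⟩

end SepDemo
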